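/- Let S_n be a sum of n i.i.d. Rademacher random variables and let w_n, m_n ≥ 1 be sequences with w_n·m_n = o(√n) and w_n⁵ = o(n^{3/2}). Then the ratio P(S_n ≥ w_n√n - m_n) / P(S_n ≥ w_n√n + m_n) is O(1), i.e. bounded above by an absolute constant for all large n. -/

import Mathlib

set_option maxHeartbeats 1000000

open Filter Asymptotics

/-- `radTailCount n x = ∑_{k : 2k-n ≥ x} C(n,k)`, so that a sum `S_n` of `n` i.i.d.
Rademacher variables satisfies `P(S_n ≥ x) = radTailCount n x / 2^n`. -/
noncomputable def radTailCount (n : ℕ) (x : ℝ) : ℝ :=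
  ∑ k ∈ Finset.range (n + 1),
    if x ≤ 2 * (k : ℝ) - n then (n.choose k : ℝ) else 0

lemma choose_succ_real (n k : ℕ) (hk : k < n) :
    (n.choose (k+1) : ℝ) * ((k:ℝ)+1) = (n.choose k : ℝ) * ((n : ℝ) - k) := by
  have h := Nat.choose_succ_right_eq n k
  have h2 : ((n.choose (k+1) * (k+1) : ℕ) : ℝ) = ((n.choose k * (n - k) : ℕ) : ℝ) := by
    exact_mod_cast congrArg (Nat.cast (R := ℝ)) h
  push_cast [Nat.cast_sub hk.le] at h2
  linarith [h2]

lemma tail_le (n a : ℕ) (ha : n < 2*a) (han : a ≤ n) :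
    ∑ k ∈ Finset.Ico a (n+1), (n.choose k : ℝ)
      ≤ (n.choose a : ℝ) * ((a:ℝ)+1) / (2*(a:ℝ)+1-n) := by
  set T : ℝ := ∑ k ∈ Finset.Ico a (n+1), (n.choose k : ℝ) with hT
  have hna : (n:ℝ) < 2*a := by exact_mod_cast ha
  have hden : (0:ℝ) < 2*(a:ℝ)+1-n := by linarith
  have key : (T - (n.choose a : ℝ)) * ((a:ℝ)+1) ≤ ((n:ℝ) - a) * T := by
    have h1 : T - (n.choose a : ℝ) = ∑ k ∈ Finset.Ico a n, (n.choose (k+1) : ℝ) := by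
      have e1 : T = (n.choose a : ℝ) + ∑ k ∈ Finset.Ico (a+1) (n+1), (n.choose k : ℝ) := by
        rw [hT, Finset.sum_eq_sum_Ico_succ_bot (by omega : a < n+1)]
      have e2 : ∑ k ∈ Finset.Ico (a+1) (n+1), (n.choose k : ℝ)
          = ∑ k ∈ Finset.Ico a n, (n.choose (k+1) : ℝ) := by
        rw [Finset.sum_Ico_eq_sum_range, Finset.sum_Ico_eq_sum_range]
        have e3 : n + 1 - (a+1) = n - a := by omega
        rw [e3]
        exact Finset.sum_congr rfl (fun k _ => by
          have : a + 1 + k = a + k + 1 := by omega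
          rw [this])
      rw [e1, e2]; ring
    have h3 : (∑ k ∈ Finset.Ico a n, (n.choose (k+1) : ℝ)) * ((a:ℝ)+1)
        ≤ ((n:ℝ) - a) * ∑ k ∈ Finset.Ico a n, (n.choose k : ℝ) := by
      rw [Finset.sum_mul, Finset.mul_sum]
      apply Finset.sum_le_sum
      intro k hk
      rw [Finset.mem_Ico] at hk
      have hid := choose_succ_real n k hk.2
      have hcn : (0:ℝ) ≤ (n.choose k : ℝ) := by positivity
      have hak : (a:ℝ) ≤ k := by exact_mod_cast hk.1
      have hkn : (k:ℝ) ≤ n := by exact_mod_cast hk.2.le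
      have hx : (n.choose (k+1) : ℝ) * ((a:ℝ)+1) * ((k:ℝ)+1)
          ≤ ((n:ℝ) - a) * (n.choose k : ℝ) * ((k:ℝ)+1) := by
        have : (n.choose (k+1) : ℝ) * ((a:ℝ)+1) * ((k:ℝ)+1)
            = (n.choose k : ℝ) * ((n:ℝ) - k) * ((a:ℝ)+1) := by
          rw [mul_right_comm, hid]
        rw [this]
        have hfrac : ((n:ℝ) - k) * ((a:ℝ)+1) ≤ ((n:ℝ) - a) * ((k:ℝ)+1) := by
          nlinarith [mul_le_mul_of_nonneg_right hak (show (0:ℝ) ≤ (n:ℝ)+1 by positivity)]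
        nlinarith [mul_le_mul_of_nonneg_left hfrac hcn]
      have hkpos : (0:ℝ) < (k:ℝ)+1 := by positivity
      exact le_of_mul_le_mul_right hx hkpos
    have h4 : ∑ k ∈ Finset.Ico a n, (n.choose k : ℝ) ≤ T := by
      rw [hT]
      apply Finset.sum_le_sum_of_subset_of_nonneg
      · exact Finset.Ico_subset_Ico le_rfl (by omega)
      · intro i _ _; positivity
    have h5 : ((n:ℝ) - a) * ∑ k ∈ Finset.Ico a n, (n.choose k : ℝ) ≤ ((n:ℝ) - a) * T := by
      apply mul_le_mul_of_nonneg_left h4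
      have : (a:ℝ) ≤ n := by exact_mod_cast han
      linarith
    rw [h1]
    exact h3.trans h5
  rw [le_div_iff₀ hden]
  nlinarith [key]

lemma choose_ratio (n a c : ℕ) (hac : a ≤ c) (hcn : c ≤ n) (ρ : ℝ) (hρ : 0 ≤ ρ)
    (hstep : ∀ k, a ≤ k → k < c → ((k:ℝ)+1) ≤ ρ * ((n:ℝ) - k)) :
    (n.choose a : ℝ) ≤ ρ^(c - a) * n.choose c := by
  induction c, hac using Nat.le_induction with
  | base => simp
  | succ c hac ih =>
    have hcn' : c ≤ n := by omega
    have hkn : (c:ℝ) < n := by exact_mod_cast (by omega : c < n)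
    have step : (n.choose c : ℝ) ≤ ρ * n.choose (c+1) := by
      have hid := choose_succ_real n c (by omega)
      have h1 := hstep c hac (by omega)
      have hch : (0:ℝ) ≤ (n.choose c : ℝ) := by positivity
      have hnc : (0:ℝ) < (n:ℝ) - c := by linarith
      -- choose c * (n - c) = choose (c+1) * (c+1) ≤ choose(c+1) * ρ * (n-c)
      have hch1 : (0:ℝ) ≤ (n.choose (c+1) : ℝ) := by positivity
      have : (n.choose c : ℝ) * ((n:ℝ) - c) ≤ ρ * (n.choose (c+1) : ℝ) * ((n:ℝ) - c) := by
        rw [← hid]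
        nlinarith [mul_le_mul_of_nonneg_left h1 hch1]
      exact le_of_mul_le_mul_right this hnc
    have ih' := ih hcn' (fun k hk hk' => hstep k hk (by omega))
    have : (n.choose a : ℝ) ≤ ρ^(c-a) * (ρ * n.choose (c+1)) := by
      refine ih'.trans ?_
      exact mul_le_mul_of_nonneg_left step (by positivity)
    have hexp : c + 1 - a = (c - a) + 1 := by omega
    rw [hexp, pow_succ]
    linarith [this]

lemma choose_anti (n k l : ℕ) (hk : n ≤ 2*k) (hkl : k ≤ l) :
    n.choose l ≤ n.choose k := by
  induction l, hkl using Nat.le_induction with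
  | base => exact le_rfl
  | succ l hkl ih =>
    refine le_trans ?_ ih
    have h := Nat.choose_succ_right_eq n l
    have h2 : n.choose (l+1) * (l+1) ≤ n.choose l * (l+1) := by
      rw [h]
      exact Nat.mul_le_mul_left _ (by omega)
    exact Nat.le_of_mul_le_mul_right h2 (by omega)

lemma radTailCount_eq (n : ℕ) (x : ℝ) :
    radTailCount n x = ∑ k ∈ Finset.Ico (⌈((n:ℝ) + x)/2⌉₊) (n+1), (n.choose k : ℝ) := by
  rw [radTailCount]
  rw [← Finset.sum_filter]
  congr 1
  ext k
  simp only [Finset.mem_filter, Finset.mem_range, Finset.mem_Ico]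
  constructor
  · rintro ⟨hk, hx⟩
    refine ⟨?_, hk⟩
    rw [Nat.ceil_le, div_le_iff₀ (by norm_num : (0:ℝ) < 2)]
    linarith
  · rintro ⟨hc, hk⟩
    refine ⟨hk, ?_⟩
    rw [Nat.ceil_le, div_le_iff₀ (by norm_num : (0:ℝ) < 2)] at hc
    linarith

/-- If `w_n, m_n ≥ 1`, `w_n·m_n = o(√n)` and `w_n⁵ = o(n^{3/2})`, then
`P(S_n ≥ w_n√n - m_n) / P(S_n ≥ w_n√n + m_n) = O(1)`: there is a constant `C` with
`P(S_n ≥ w_n√n - m_n) ≤ C·P(S_n ≥ w_n√n + m_n)` for all large `n`. -/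
theorem rademacher_tail_ratio_bounded (w m : ℕ → ℝ)
    (hw : ∀ n, 1 ≤ w n) (hm : ∀ n, 1 ≤ m n)
    (h1 : (fun n : ℕ => w n * m n) =o[atTop] fun n : ℕ => Real.sqrt n)
    (h2 : (fun n : ℕ => (w n) ^ 5) =o[atTop] fun n : ℕ => (n : ℝ) ^ ((3 : ℝ) / 2)) :
    ∃ C : ℝ, ∀ᶠ n in atTop,
      radTailCount n (w n * Real.sqrt n - m n)
        ≤ C * radTailCount n (w n * Real.sqrt n + m n) := by
  refine ⟨4 * Real.exp 100, ?_⟩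
  filter_upwards [h1.def (by norm_num : (0:ℝ) < 1/100),
    eventually_ge_atTop 1000000] with n hn1 hn2
  set W := w n with hWdef
  set M := m n with hMdef
  have hw1 : 1 ≤ W := hw n
  have hm1 : 1 ≤ M := hm n
  have hW0 : (0:ℝ) < W := by linarith
  have hM0 : (0:ℝ) < M := by linarith
  set s := Real.sqrt n with hsdef
  have hs0 : (0:ℝ) ≤ s := Real.sqrt_nonneg _
  have hs2 : s^2 = (n:ℝ) := Real.sq_sqrt (by positivity)
  have hs1000 : (1000:ℝ) ≤ s := by
    rw [hsdef, Real.le_sqrt (by norm_num) (by positivity)]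
    norm_num
    exact_mod_cast hn2
  have hnR : (1000000:ℝ) ≤ (n:ℝ) := by exact_mod_cast hn2
  clear_value W M s
  have hwm : W * M ≤ s / 100 := by
    simp only [Real.norm_eq_abs] at hn1
    rw [abs_of_nonneg (by positivity), abs_of_nonneg hs0] at hn1
    linarith
  have hMs : M ≤ s / 100 := le_trans (le_mul_of_one_le_left hM0.le hw1) hwm
  have hWs : W ≤ s / 100 := le_trans (le_mul_of_one_le_right hW0.le hm1) hwm
  set x := W * s with hxdef
  have hxs : s ≤ x := by rw [hxdef]; exact le_mul_of_one_le_left hs0 hw1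
  clear_value x
  have hxn : x ≤ (n:ℝ)/100 := by
    rw [hxdef]; linarith [mul_le_mul_of_nonneg_right hWs hs0, hs2]
  rw [radTailCount_eq n (x - M), radTailCount_eq n (x + M)]
  set a := ⌈((n:ℝ) + (x - M))/2⌉₊ with hadef
  set b := ⌈((n:ℝ) + (x + M))/2⌉₊ with hbdef
  set L := ⌈s / W⌉₊ with hLdef
  set c := b + (L - 1) with hcdef
  clear_value a b L
  have hcdef' : c = b + (L - 1) := hcdef
  clear_value c
  have hsW1 : (1:ℝ) ≤ s / W := by
    rw [le_div_iff₀ hW0]; linarith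
  have hsW0 : (0:ℝ) < s / W := by linarith
  have ha1 : ((n:ℝ) + (x - M))/2 ≤ a := by rw [hadef]; exact Nat.le_ceil _
  have ha2 : (a:ℝ) < ((n:ℝ) + (x - M))/2 + 1 := by
    rw [hadef]; exact Nat.ceil_lt_add_one (by linarith)
  have hb1 : ((n:ℝ) + (x + M))/2 ≤ b := by rw [hbdef]; exact Nat.le_ceil _
  have hb2 : (b:ℝ) < ((n:ℝ) + (x + M))/2 + 1 := by
    rw [hbdef]; exact Nat.ceil_lt_add_one (by linarith)
  have hL1 : 1 ≤ L := by rw [hLdef]; exact Nat.ceil_pos.mpr hsW0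
  have hLr1 : s / W ≤ (L:ℝ) := by rw [hLdef]; exact Nat.le_ceil _
  have hLr2 : (L:ℝ) < s/W + 1 := by rw [hLdef]; exact Nat.ceil_lt_add_one hsW0.le
  have hLr3 : (L:ℝ) ≤ 2*(s/W) := by linarith
  have hLs : (L:ℝ) ≤ 2*s := by
    have : s / W ≤ s := by
      rw [div_le_iff₀ hW0]; exact le_mul_of_one_le_right hs0 hw1
    linarith
  have hc1 : c + 1 = b + L := by omega
  have hcR : (c:ℝ) + 1 = (b:ℝ) + L := by exact_mod_cast congrArg (Nat.cast (R := ℝ)) hc1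
  have hsn : s ≤ (n:ℝ)/1000 := by
    linarith [mul_le_mul_of_nonneg_right hs1000 hs0, hs2]
  have hc23 : (c:ℝ) ≤ 2*(n:ℝ)/3 := by linarith
  have hcn : c ≤ n := by
    have : (c:ℝ) ≤ (n:ℝ) := by linarith
    exact_mod_cast this
  have h2a : n < 2*a := by
    have : (n:ℝ) < 2*(a:ℝ) := by linarith
    exact_mod_cast this
  have hab : a ≤ b := by
    rw [hadef, hbdef]; exact Nat.ceil_le_ceil (by linarith)
  have hac : a ≤ c := by omega
  have haN : a ≤ n := le_trans hac hcn
  have h2b : n ≤ 2*b := by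
    have : (n:ℝ) < 2*(b:ℝ) := by linarith
    have h' : n < 2*b := by exact_mod_cast this
    omega
  have hchc0 : (0:ℝ) ≤ (n.choose c : ℝ) := by positivity
  have hcha0 : (0:ℝ) ≤ (n.choose a : ℝ) := by positivity
  -- upper bound for the first tail
  have hT1 : ∑ k ∈ Finset.Ico a (n+1), (n.choose k : ℝ)
      ≤ (n.choose a : ℝ) * ((a:ℝ)+1) / (2*(a:ℝ)+1-(n:ℝ)) := tail_le n a h2a haN
  have hdena : (0:ℝ) < 2*(a:ℝ)+1-(n:ℝ) := by
    have : (n:ℝ) < 2*(a:ℝ) := by exact_mod_cast h2a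
    linarith
  have hfrac : (n.choose a : ℝ) * ((a:ℝ)+1) / (2*(a:ℝ)+1-(n:ℝ))
      ≤ (n.choose a : ℝ) * (4*(L:ℝ)) := by
    rw [div_le_iff₀ hdena]
    have haNR : (a:ℝ) ≤ (n:ℝ) := by exact_mod_cast haN
    have hd1 : x - M ≤ 2*(a:ℝ)+1-(n:ℝ) := by linarith
    have hd2 : x/2 ≤ x - M := by linarith
    have hkey : (a:ℝ) + 1 ≤ 4*(L:ℝ)*(2*(a:ℝ)+1-(n:ℝ)) := by
      have e1 : 4*(s/W)*(x/2) = 2*s^2 := by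
        rw [hxdef]; field_simp; ring
      have e2 : 4*(s/W)*(x/2) ≤ 4*(L:ℝ)*(2*(a:ℝ)+1-(n:ℝ)) := by
        apply mul_le_mul (by linarith) (by linarith) (by linarith) (by positivity)
      linarith [hs2, e1, e2, haNR, hnR]
    linarith [mul_le_mul_of_nonneg_left hkey hcha0]
  -- ratio of binomial coefficients
  set ρ : ℝ := (c:ℝ)/((n:ℝ) - (c:ℝ) + 1) with hρdef
  clear_value ρ
  have hden2 : (0:ℝ) < (n:ℝ) - (c:ℝ) + 1 := by linarith
  have hn3 : (n:ℝ)/3 ≤ (n:ℝ) - (c:ℝ) + 1 := by linarith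
  have hρ0 : (0:ℝ) ≤ ρ := by rw [hρdef]; positivity
  have hstep : ∀ k, a ≤ k → k < c → ((k:ℝ)+1) ≤ ρ * ((n:ℝ) - k) := by
    intro k hk1 hk2
    have hkc : (k:ℝ)+1 ≤ (c:ℝ) := by exact_mod_cast hk2
    have hnk : (n:ℝ) - (c:ℝ) + 1 ≤ (n:ℝ) - k := by linarith
    calc ((k:ℝ)+1) ≤ (c:ℝ) := hkc
      _ = ρ * ((n:ℝ) - (c:ℝ) + 1) := by
          rw [hρdef]; field_simp
      _ ≤ ρ * ((n:ℝ) - k) := mul_le_mul_of_nonneg_left hnk hρ0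
  have hratio := choose_ratio n a c hac hcn ρ hρ0 hstep
  have hρpow : ρ^(c - a) ≤ Real.exp 100 := by
    set u : ℝ := (2*(c:ℝ) - (n:ℝ) - 1)/((n:ℝ) - (c:ℝ) + 1) with hudef
    clear_value u
    have hnum0 : (0:ℝ) ≤ 2*(c:ℝ) - (n:ℝ) - 1 := by
      have h' : n + 1 ≤ 2*c := by omega
      have : (n:ℝ) + 1 ≤ 2*(c:ℝ) := by exact_mod_cast h'
      linarith
    have hu0 : (0:ℝ) ≤ u := by rw [hudef]; exact div_nonneg hnum0 hden2.le
    have hρu : ρ = 1 + u := by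
      rw [hρdef, hudef]; field_simp; ring
    have hexp1 : ρ ≤ Real.exp u := by
      rw [hρu]; linarith [Real.add_one_le_exp u]
    have hpow : ρ^(c-a) ≤ (Real.exp u)^(c-a) := pow_le_pow_left₀ hρ0 hexp1 _
    have hDcast : ((c - a : ℕ):ℝ) = (c:ℝ) - (a:ℝ) := by
      rw [Nat.cast_sub hac]
    set E : ℝ := s / W with hEdef
    clear_value E
    have hEW : E * W = s := by rw [hEdef]; field_simp
    have hE0 : (0:ℝ) < E := hsW0
    have hEs : E ≤ s := by
      rw [hEdef, div_le_iff₀ hW0]; exact le_mul_of_one_le_right hs0 hw1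
    have hDb : (c:ℝ) - (a:ℝ) ≤ M + 2*E := by linarith
    have h2c : 2*(c:ℝ) - (n:ℝ) - 1 ≤ x + M + 4*E := by linarith
    have hD0 : (0:ℝ) ≤ (c:ℝ) - (a:ℝ) := by
      have : (a:ℝ) ≤ (c:ℝ) := by exact_mod_cast hac
      linarith
    have hprod : ((c:ℝ) - (a:ℝ)) * (2*(c:ℝ) - (n:ℝ) - 1)
        ≤ (M + 2*E) * (x + M + 4*E) :=
      mul_le_mul hDb h2c hnum0 (by linarith)
    have hEWs : E * W * s = s^2 := by rw [hEW]; ring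
    have t1 : W*M*s ≤ s^2/100 := by
      linarith [mul_le_mul_of_nonneg_right hwm hs0]
    have t2 : M*M ≤ s^2/10000 := by
      linarith [mul_le_mul hMs hMs hM0.le (by positivity : (0:ℝ) ≤ s/100)]
    have t3 : M*E ≤ s^2/100 := by
      linarith [mul_le_mul hMs hEs hE0.le (by positivity : (0:ℝ) ≤ s/100)]
    have t4 : E*E ≤ s^2 := by
      linarith [mul_le_mul hEs hEs hE0.le hs0]
    have hexpand : (M + 2*E) * (x + M + 4*E) ≤ 11*s^2 := by
      rw [hxdef]
      linarith [t1, t2, t3, t4, hEWs]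
    have h4 : ((c - a : ℕ):ℝ) * u ≤ 100 := by
      rw [hDcast, hudef]
      have hre : ((c:ℝ)-(a:ℝ)) * ((2*(c:ℝ)-(n:ℝ)-1)/((n:ℝ)-(c:ℝ)+1))
          = (((c:ℝ)-(a:ℝ)) * (2*(c:ℝ)-(n:ℝ)-1))/((n:ℝ)-(c:ℝ)+1) := by ring
      rw [hre, div_le_iff₀ hden2]
      have h11 : ((c:ℝ)-(a:ℝ))*(2*(c:ℝ)-(n:ℝ)-1) ≤ 11*(n:ℝ) := by
        calc ((c:ℝ)-(a:ℝ))*(2*(c:ℝ)-(n:ℝ)-1) ≤ (M + 2*E) * (x + M + 4*E) := hprod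
          _ ≤ 11*s^2 := hexpand
          _ = 11*(n:ℝ) := by rw [hs2]
      linarith
    calc ρ^(c-a) ≤ (Real.exp u)^(c-a) := hpow
      _ = Real.exp (((c-a:ℕ):ℝ) * u) := (Real.exp_nat_mul u _).symm
      _ ≤ Real.exp 100 := Real.exp_le_exp.mpr h4
  -- lower bound for the second tail
  have hnb : ∀ k, b ≤ k → n ≤ 2*k := fun k hk => by omega
  have hlow : ∀ k ∈ Finset.Ico b (c+1), (n.choose c : ℝ) ≤ (n.choose k : ℝ) := by
    intro k hk
    rw [Finset.mem_Ico] at hk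
    exact_mod_cast Nat.cast_le.mpr (choose_anti n k c (hnb k hk.1) (by omega))
  have hcard := Finset.card_nsmul_le_sum (Finset.Ico b (c+1)) (fun k => (n.choose k : ℝ))
      ((n.choose c : ℝ)) hlow
  have hcardL : (Finset.Ico b (c+1)).card = L := by
    rw [Nat.card_Ico]; omega
  have hT2 : (L:ℝ) * (n.choose c : ℝ) ≤ ∑ k ∈ Finset.Ico b (n+1), (n.choose k : ℝ) := by
    have hsub : ∑ k ∈ Finset.Ico b (c+1), (n.choose k : ℝ)
        ≤ ∑ k ∈ Finset.Ico b (n+1), (n.choose k : ℝ) := by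
      apply Finset.sum_le_sum_of_subset_of_nonneg
      · exact Finset.Ico_subset_Ico le_rfl (by omega)
      · intro i _ _; positivity
    rw [hcardL, nsmul_eq_mul] at hcard
    linarith
  -- combine
  have hchain : ∑ k ∈ Finset.Ico a (n+1), (n.choose k : ℝ)
      ≤ 4 * Real.exp 100 * ((L:ℝ) * (n.choose c : ℝ)) := by
    have c1 : (n.choose a : ℝ) * (4*(L:ℝ)) ≤ (Real.exp 100 * (n.choose c:ℝ)) * (4*(L:ℝ)) := by
      apply mul_le_mul_of_nonneg_right _ (by positivity)
      calc (n.choose a : ℝ) ≤ ρ^(c-a) * (n.choose c : ℝ) := hratio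
        _ ≤ Real.exp 100 * (n.choose c : ℝ) :=
            mul_le_mul_of_nonneg_right hρpow hchc0
    calc ∑ k ∈ Finset.Ico a (n+1), (n.choose k : ℝ)
        ≤ (n.choose a : ℝ) * ((a:ℝ)+1) / (2*(a:ℝ)+1-(n:ℝ)) := hT1
      _ ≤ (n.choose a : ℝ) * (4*(L:ℝ)) := hfrac
      _ ≤ (Real.exp 100 * (n.choose c:ℝ)) * (4*(L:ℝ)) := c1
      _ = 4 * Real.exp 100 * ((L:ℝ) * (n.choose c : ℝ)) := by ring
  calc ∑ k ∈ Finset.Ico a (n+1), (n.choose k : ℝ)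
      ≤ 4 * Real.exp 100 * ((L:ℝ) * (n.choose c : ℝ)) := hchain
    _ ≤ 4 * Real.exp 100 * ∑ k ∈ Finset.Ico b (n+1), (n.choose k : ℝ) :=
        mul_le_mul_of_nonneg_left hT2 (by positivity)
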